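/- Quantitative per-step surplus bound for asymptotic budget balance: for every executed step j of NRM in trees, with X_j ordered by decreasing subtree maxima v^{(1)}_{V_{x_1}} ≥ v^{(1)}_{V_{x_2}} ≥ … and λ = (n_{x_1}+n_{x_2})/n_{X_j}, the step surplus satisfies 0 ≤ p^{auc}_{a_j} − p^{auc}_{a_{j−1}} − Σ_{q∈X_j} R_q ≤ λ·(v^{(1)}_{V_{x_2}} − v^{(1)}_{V_{x_3}}) ≤ λ·M, where M is any upper bound on all reported valuations. -/
import Mathlib


open Finset

attribute [local instance] Classical.propDecidable

noncomputable section

/-- A tree network rooted at a resource owner `o`: the agents are the elements of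
the finite type `α`, and `parent i = none` means that the parent of agent `i` is
the owner `o` herself.  The field `depth` records the distance to the owner and
witnesses that the parent relation is well-founded. -/
structure TreeNet (α : Type) [Fintype α] [DecidableEq α] where
  parent : α → Option α
  depth : α → ℕ
  depth_root : ∀ i, parent i = none → depth i = 0
  depth_child : ∀ i j, parent i = some j → depth i = depth j + 1

namespace TreeNet

variable {α : Type} [Fintype α] [DecidableEq α]

/-- `j` is a strict ancestor of `i`: iterating `parent` from `i` reaches `j`. -/
def StrictAnc (T : TreeNet α) (j i : α) : Prop :=
  ∃ m : ℕ, 0 < m ∧ (fun x : Option α => x.bind T.parent)^[m] (some i) = some j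

/-- the subtree `V_i` of agent `i` inside the participant set `V`:
`i` together with all its descendants. -/
def sub (T : TreeNet α) (V : Finset α) (i : α) : Finset α :=
  V.filter fun x => x = i ∨ T.StrictAnc i x

/-- `n_i`, the number of agents in the subtree of `i`. -/
def nsub (T : TreeNet α) (V : Finset α) (i : α) : ℕ := (T.sub V i).card

/-- `v^{(1)}_D`: the highest reported valuation in `D` (with the convention `0`
for `D = ∅`). -/
def vmax (val : α → ℝ) (D : Finset α) : ℝ :=
  if h : D.Nonempty then D.sup' h val else 0

/-- the list of strict ancestors of `i`, ordered by increasing depth. -/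
def ancList (T : TreeNet α) (i : α) : List α :=
  match h : T.parent i with
  | none => []
  | some j => T.ancList j ++ [j]
termination_by T.depth i
decreasing_by
  have := T.depth_child i j h
  omega

/-- the full sequence `a_1, …, a_{k+1}`: the strict ancestors of the highest
bidder `hb` ordered by increasing depth, followed by `hb` itself. -/
def seq (T : TreeNet α) (hb : α) : List α := T.ancList hb ++ [hb]

/-- `a_j`, as an `Option α`: `none` for `j = 0` (the owner `o`) and out of range. -/
def aIdx (T : TreeNet α) (hb : α) (j : ℕ) : Option α :=
  if j = 0 then none else (T.seq hb)[j - 1]?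

/-- the required payment `p^{auc}_{a_j} = v^{(1)}_{V ∖ V_{a_j}}` (and `0` for `j = 0`). -/
def pauc (T : TreeNet α) (V : Finset α) (val : α → ℝ) (hb : α) (j : ℕ) : ℝ :=
  match T.aIdx hb j with
  | none => 0
  | some i => vmax val (V \ T.sub V i)

/-- the children inside `V` of a vertex (`none` denotes the owner `o`). -/
def childrenOf (T : TreeNet α) (V : Finset α) (x : Option α) : Finset α :=
  V.filter fun y => T.parent y = x

/-- `X_j`: the set of children of `a_{j-1}`. -/
def X (T : TreeNet α) (V : Finset α) (hb : α) (j : ℕ) : Finset α :=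
  T.childrenOf V (T.aIdx hb (j - 1))

/-- `n_{X_j} = Σ_{q ∈ X_j} n_q`. -/
def nX (T : TreeNet α) (V : Finset α) (hb : α) (j : ℕ) : ℕ :=
  ∑ q ∈ T.X V hb j, T.nsub V q

/-- subtree of an optional vertex, with the convention `∅` for `none`. -/
def subO (T : TreeNet α) (V : Finset α) : Option α → Finset α
  | none => ∅
  | some i => T.sub V i

/-- subtree of an optional vertex, with the convention `V` for the owner `o`. -/
def subUp (T : TreeNet α) (V : Finset α) : Option α → Finset α
  | none => V
  | some i => T.sub V i

/-- `S_{-q}` at step `j`, where `sel` selects a highest bidder in a given set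
(`h' = sel (V ∖ V_q)` is a highest bidder without `q`'s participation). -/
def Sneg (T : TreeNet α) (V : Finset α) (val : α → ℝ) (sel : Finset α → Option α)
    (hb : α) (j : ℕ) (q : α) : ℝ :=
  match sel (V \ T.sub V q) with
  | none => 0
  | some h' =>
      if T.aIdx h' (j - 1) = T.aIdx hb (j - 1) then
        vmax val (V \ (T.subO V (T.aIdx h' j) ∪ T.sub V q)) - T.pauc V val hb (j - 1)
      else 0

/-- the money `R_q = (n_q / n_{X_j}) ⬝ S_{-q}` redistributed to `q` in step `j`. -/
def R (T : TreeNet α) (V : Finset α) (val : α → ℝ) (sel : Finset α → Option α)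
    (hb : α) (j : ℕ) (q : α) : ℝ :=
  (T.nsub V q : ℝ) / (T.nX V hb j : ℝ) * T.Sneg V val sel hb j q

/-- the allocation condition `v̂_{a_j} ≥ p^{auc}_{a_j}` holds at step `j`. -/
def Stops (T : TreeNet α) (V : Finset α) (val : α → ℝ) (hb : α) (j : ℕ) : Prop :=
  ∃ i, T.aIdx hb j = some i ∧ T.pauc V val hb j ≤ val i

/-- the step `J` at which the procedure stops. -/
def stepJ (T : TreeNet α) (V : Finset α) (val : α → ℝ) (hb : α) : ℕ :=
  sInf {j | 1 ≤ j ∧ T.Stops V val hb j}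

/-- the winner of the item. -/
def winner (T : TreeNet α) (V : Finset α) (val : α → ℝ) (hb : α) : Option α :=
  T.aIdx hb (T.stepJ V val hb)

/-- the (first) step at which agent `i` is assigned a payment. -/
def stepOf (T : TreeNet α) (V : Finset α) (val : α → ℝ) (hb : α) (i : α) : ℕ :=
  sInf {j | 1 ≤ j ∧ j ≤ T.stepJ V val hb ∧ i ∈ T.X V hb j}

/-- the payment of agent `i` under NRM: the winner pays `p^{auc}_{a_J} - R_{a_J}`,
every other agent considered in some executed step `j` pays `-R_q`, and every
agent not assigned a payment pays `0`. -/
def pay (T : TreeNet α) (V : Finset α) (val : α → ℝ) (sel : Finset α → Option α)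
    (hb : α) (i : α) : ℝ :=
  if T.winner V val hb = some i then
    T.pauc V val hb (T.stepJ V val hb) - T.R V val sel hb (T.stepJ V val hb) i
  else if ∃ j, 1 ≤ j ∧ j ≤ T.stepJ V val hb ∧ i ∈ T.X V hb j then
    -T.R V val sel hb (T.stepOf V val hb i) i
  else 0

/-- the surplus `S = Σ_{i ∈ V} p_i` of the mechanism. -/
def surplus (T : TreeNet α) (V : Finset α) (val : α → ℝ) (sel : Finset α → Option α)
    (hb : α) : ℝ :=
  ∑ i ∈ V, T.pay V val sel hb i

/-- the utility of agent `i` whose true valuation is `tv`: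
`tv` if she wins, minus her payment. -/
def util (T : TreeNet α) (V : Finset α) (val : α → ℝ) (sel : Finset α → Option α)
    (hb : α) (tv : ℝ) (i : α) : ℝ :=
  (if T.winner V val hb = some i then tv else 0) - T.pay V val sel hb i

/-- the participant set `V` is closed under taking parents
(as is every set generated by invitation chains). -/
def Closed (T : TreeNet α) (V : Finset α) : Prop :=
  ∀ i ∈ V, ∀ j, T.parent i = some j → j ∈ V

/-- `hb` is a highest bidder of `V`. -/
def IsTop (V : Finset α) (val : α → ℝ) (hb : α) : Prop :=
  hb ∈ V ∧ ∀ i ∈ V, val i ≤ val hb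

/-- `sel` selects a highest bidder of every nonempty finite set of agents. -/
def SelValid (val : α → ℝ) (sel : Finset α → Option α) : Prop :=
  ∀ D : Finset α, (D.Nonempty → ∃ b, sel D = some b) ∧
    ∀ b, sel D = some b → b ∈ D ∧ ∀ x ∈ D, val x ≤ val b

/-- the true neighbour set of agent `i` that she may invite: her children. -/
def childrenAll (T : TreeNet α) (i : α) : Finset α :=
  Finset.univ.filter fun y => T.parent y = some i

/-- agent `i` is reached from the owner by the chains of invitations `inv`
(the owner informs all her neighbours, i.e. the agents with `parent = none`). -/
def Reached (T : TreeNet α) (inv : α → Finset α) (i : α) : Prop :=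
  match h : T.parent i with
  | none => True
  | some j => T.Reached inv j ∧ i ∈ inv j
termination_by T.depth i
decreasing_by
  have := T.depth_child i j h
  omega

/-- the participant set generated by the invitations `inv`. -/
def Vgen (T : TreeNet α) (inv : α → Finset α) : Finset α :=
  Finset.univ.filter fun i => T.Reached inv i

end TreeNet


namespace TreeNet

variable {α : Type} [Fintype α] [DecidableEq α]

lemma le_vmax {val : α → ℝ} {D : Finset α} {x : α} (hx : x ∈ D) :
    val x ≤ vmax val D := by
  rw [vmax, dif_pos ⟨x, hx⟩]; exact Finset.le_sup' val hx

lemma vmax_le {val : α → ℝ} {D : Finset α} {B : ℝ} (hD : D.Nonempty)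
    (h : ∀ x ∈ D, val x ≤ B) : vmax val D ≤ B := by
  rw [vmax, dif_pos hD]; exact Finset.sup'_le hD val h

lemma vmax_nonneg {val : α → ℝ} {D : Finset α} (h : ∀ x ∈ D, 0 ≤ val x) :
    0 ≤ vmax val D := by
  rw [vmax]; split
  · rename_i hD; obtain ⟨x, hx⟩ := hD
    exact le_trans (h x hx) (Finset.le_sup' val hx)
  · exact le_refl _

lemma vmax_le' {val : α → ℝ} {D : Finset α} {B : ℝ} (hB : 0 ≤ B)
    (h : ∀ x ∈ D, val x ≤ B) : vmax val D ≤ B := by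
  rw [vmax]; split
  · rename_i hD; exact Finset.sup'_le hD val h
  · exact hB


lemma ancList_of_parent_none {T : TreeNet α} {i : α} (h : T.parent i = none) :
    T.ancList i = [] := by
  rw [ancList.eq_def]; split <;> simp_all

lemma ancList_of_parent_some {T : TreeNet α} {i p : α} (h : T.parent i = some p) :
    T.ancList i = T.ancList p ++ [p] := by
  rw [ancList.eq_def]; split <;> simp_all

lemma seq_of_parent_none {T : TreeNet α} {i : α} (h : T.parent i = none) :
    T.seq i = [i] := by
  rw [seq, ancList_of_parent_none h]; rfl

lemma seq_of_parent_some {T : TreeNet α} {i p : α} (h : T.parent i = some p) :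
    T.seq i = T.seq p ++ [i] := by
  rw [seq, ancList_of_parent_some h, seq, List.append_assoc]

lemma seq_length (T : TreeNet α) : ∀ n (i : α), T.depth i = n →
    (T.seq i).length = n + 1 := by
  intro n
  induction n using Nat.strong_induction_on with
  | _ n ih =>
    intro i hd
    cases hp : T.parent i with
    | none =>
      have h0 := T.depth_root i hp
      rw [seq_of_parent_none hp]; simp; omega
    | some p =>
      have hdc := T.depth_child i p hp
      rw [seq_of_parent_some hp]
      have hlt : T.depth p < n := by omega
      rw [List.length_append, ih _ hlt p rfl]
      simp; omega

lemma seq_getElem_depth (T : TreeNet α) : ∀ n (i : α), T.depth i = n →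
    (T.seq i)[T.depth i]? = some i := by
  intro n
  induction n using Nat.strong_induction_on with
  | _ n ih =>
    intro i hd
    cases hp : T.parent i with
    | none =>
      have h0 := T.depth_root i hp
      rw [seq_of_parent_none hp, h0]; rfl
    | some p =>
      have hdc := T.depth_child i p hp
      rw [seq_of_parent_some hp]
      rw [List.getElem?_append_right (by rw [T.seq_length (T.depth p) p rfl]; omega)]
      rw [T.seq_length (T.depth p) p rfl]
      simp [hdc]

lemma seq_getElem_lt {T : TreeNet α} {i p : α} (hp : T.parent i = some p)
    {m : ℕ} (hm : m ≤ T.depth p) : (T.seq i)[m]? = (T.seq p)[m]? := by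
  rw [seq_of_parent_some hp,
    List.getElem?_append_left (by rw [T.seq_length (T.depth p) p rfl]; omega)]

lemma seq_getElem_some_depth (T : TreeNet α) : ∀ n (i : α), T.depth i = n →
    ∀ m z, (T.seq i)[m]? = some z → T.depth z = m := by
  intro n
  induction n using Nat.strong_induction_on with
  | _ n ih =>
    intro i hd m z hz
    have hmlt : m < (T.seq i).length := (List.getElem?_eq_some_iff.mp hz).1
    rw [T.seq_length n i hd] at hmlt
    rcases Nat.lt_or_ge m n with hmn | hmn
    · cases hp : T.parent i with
      | none => have := T.depth_root i hp; omega
      | some p =>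
        have hdc := T.depth_child i p hp
        rw [seq_getElem_lt hp (by omega)] at hz
        exact ih (T.depth p) (by omega) p rfl m z hz
    · have hm : m = n := by omega
      subst hm; subst hd
      rw [T.seq_getElem_depth _ i rfl] at hz
      simp at hz; subst hz; rfl

lemma seq_getElem_succ (T : TreeNet α) : ∀ n (i : α), T.depth i = n →
    ∀ m w, (T.seq i)[m+1]? = some w → (T.seq i)[m]? = T.parent w := by
  intro n
  induction n using Nat.strong_induction_on with
  | _ n ih =>
    intro i hd m w hw
    have hmlt : m + 1 < (T.seq i).length := (List.getElem?_eq_some_iff.mp hw).1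
    rw [T.seq_length n i hd] at hmlt
    cases hp : T.parent i with
    | none => have := T.depth_root i hp; omega
    | some p =>
      have hdc := T.depth_child i p hp
      rcases Nat.lt_or_ge (m+1) n with hmn | hmn
      · rw [seq_getElem_lt hp (by omega)] at hw ⊢
        exact ih (T.depth p) (by omega) p rfl m w hw
      · have hm : m + 1 = n := by omega
        have hw' : w = i := by
          have h2 := T.seq_getElem_depth n i hd
          rw [hd, ← hm] at h2; rw [h2] at hw; simpa using hw.symm
        subst hw'
        rw [seq_getElem_lt hp (by omega), hp]
        have h3 : m = T.depth p := by omega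
        rw [h3, T.seq_getElem_depth _ p rfl]

lemma seq_getElem_zero_parent (T : TreeNet α) : ∀ n (i : α), T.depth i = n →
    ∀ w, (T.seq i)[0]? = some w → T.parent w = none := by
  intro n
  induction n using Nat.strong_induction_on with
  | _ n ih =>
    intro i hd w hw
    cases hp : T.parent i with
    | none =>
      rw [seq_of_parent_none hp] at hw
      simp at hw; subst hw; exact hp
    | some p =>
      have hdc := T.depth_child i p hp
      rw [seq_getElem_lt hp (by omega)] at hw
      exact ih (T.depth p) (by omega) p rfl w hw

lemma iter_none (T : TreeNet α) (m : ℕ) :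
    (fun x : Option α => x.bind T.parent)^[m] none = none :=
  Function.iterate_fixed rfl m

lemma iter_eq_some (T : TreeNet α) : ∀ (m : ℕ) (i z : α),
    (fun x : Option α => x.bind T.parent)^[m] (some i) = some z →
    T.depth i = T.depth z + m ∧ (T.seq i)[T.depth z]? = some z := by
  intro m
  induction m with
  | zero => intro i z h; simp at h; subst h
            exact ⟨rfl, T.seq_getElem_depth _ i rfl⟩
  | succ m ih =>
    intro i z h
    replace h : (fun x : Option α => x.bind T.parent)^[m] (T.parent i) = some z := by
      rw [Function.iterate_succ_apply] at h; exact h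
    cases hp : T.parent i with
    | none => rw [hp] at h; rw [T.iter_none] at h; simp at h
    | some p =>
      rw [hp] at h
      obtain ⟨hd, hs⟩ := ih p z h
      have hdc := T.depth_child i p hp
      exact ⟨by omega, by rw [seq_getElem_lt hp (by omega)]; exact hs⟩

lemma iter_of_seq (T : TreeNet α) : ∀ n (i : α), T.depth i = n → ∀ z,
    T.depth z ≤ T.depth i → (T.seq i)[T.depth z]? = some z →
    (fun x : Option α => x.bind T.parent)^[T.depth i - T.depth z] (some i) = some z := by
  intro n
  induction n using Nat.strong_induction_on with
  | _ n ih =>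
    intro i hd z hle hz
    rcases Nat.eq_or_lt_of_le hle with heq | hlt
    · rw [heq] at hz
      rw [T.seq_getElem_depth _ i rfl] at hz
      simp at hz; subst hz; rw [heq]; simp
    · cases hp : T.parent i with
      | none => have := T.depth_root i hp; omega
      | some p =>
        have hdc := T.depth_child i p hp
        rw [seq_getElem_lt hp (by omega)] at hz
        have hres := ih (T.depth p) (by omega) p rfl z (by omega) hz
        have harith : T.depth i - T.depth z = (T.depth p - T.depth z) + 1 := by omega
        rw [harith, Function.iterate_succ_apply]
        show (fun x : Option α => x.bind T.parent)^[T.depth p - T.depth z] (T.parent i) = some z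
        rw [hp]; exact hres

lemma strictAnc_iff (T : TreeNet α) {z i : α} :
    T.StrictAnc z i ↔ T.depth z < T.depth i ∧ (T.seq i)[T.depth z]? = some z := by
  constructor
  · rintro ⟨m, hm, hiter⟩
    obtain ⟨hd, hs⟩ := T.iter_eq_some m i z hiter
    exact ⟨by omega, hs⟩
  · rintro ⟨hlt, hs⟩
    exact ⟨T.depth i - T.depth z, by omega,
      T.iter_of_seq _ i rfl z (by omega) hs⟩

lemma mem_sub_iff (T : TreeNet α) {V : Finset α} {z x : α} :
    x ∈ T.sub V z ↔ x ∈ V ∧ (T.seq x)[T.depth z]? = some z := by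
  rw [sub, Finset.mem_filter]
  constructor
  · rintro ⟨hxV, hx | hx⟩
    · subst hx; exact ⟨hxV, T.seq_getElem_depth _ x rfl⟩
    · exact ⟨hxV, (T.strictAnc_iff.mp hx).2⟩
  · rintro ⟨hxV, hs⟩
    refine ⟨hxV, ?_⟩
    have hlt : T.depth z < (T.seq x).length := (List.getElem?_eq_some_iff.mp hs).1
    rw [T.seq_length (T.depth x) x rfl] at hlt
    rcases Nat.eq_or_lt_of_le (by omega : T.depth z ≤ T.depth x) with heq | hlt'
    · left
      rw [heq, T.seq_getElem_depth _ x rfl] at hs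
      simpa using hs
    · right; exact T.strictAnc_iff.mpr ⟨hlt', hs⟩


lemma mem_of_mem_sub {T : TreeNet α} {V : Finset α} {z x : α}
    (h : x ∈ T.sub V z) : x ∈ V := (Finset.mem_filter.mp h).1

lemma self_mem_sub {T : TreeNet α} {V : Finset α} {z : α} (h : z ∈ V) :
    z ∈ T.sub V z := Finset.mem_filter.mpr ⟨h, Or.inl rfl⟩

lemma depth_lt_of_strictAnc {T : TreeNet α} {z x : α} (h : T.StrictAnc z x) :
    T.depth z < T.depth x := (T.strictAnc_iff.mp h).1

lemma strictAnc_trans {T : TreeNet α} {z y x : α} (h1 : T.StrictAnc z y)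
    (h2 : T.StrictAnc y x) : T.StrictAnc z x := by
  obtain ⟨m1, hm1, h1⟩ := h1
  obtain ⟨m2, hm2, h2⟩ := h2
  exact ⟨m1 + m2, by omega, by rw [Function.iterate_add_apply, h2, h1]⟩

lemma strictAnc_of_parent {T : TreeNet α} {z x : α} (h : T.parent x = some z) :
    T.StrictAnc z x := ⟨1, one_pos, by simpa using h⟩

lemma mem_closed_of_strictAnc {T : TreeNet α} {V : Finset α} (hV : T.Closed V) :
    ∀ (m : ℕ) (z x : α), x ∈ V → 0 < m →
    (fun o : Option α => o.bind T.parent)^[m] (some x) = some z → z ∈ V := by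
  intro m
  induction m with
  | zero => omega
  | succ m ih =>
    intro z x hx _ hiter
    replace hiter : (fun o : Option α => o.bind T.parent)^[m] (T.parent x) = some z := by
      rw [Function.iterate_succ_apply] at hiter; exact hiter
    cases hp : T.parent x with
    | none => rw [hp, T.iter_none] at hiter; simp at hiter
    | some p =>
      rw [hp] at hiter
      have hpV : p ∈ V := hV x hx p hp
      rcases Nat.eq_zero_or_pos m with hm | hm
      · subst hm; simp at hiter; subst hiter; exact hpV
      · exact ih z p hpV hm hiter

lemma root_mem_of_mem_sub {T : TreeNet α} {V : Finset α} (hV : T.Closed V)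
    {z x : α} (h : x ∈ T.sub V z) : z ∈ V := by
  obtain ⟨hxV, hx | hx⟩ := Finset.mem_filter.mp h
  · subst hx; exact hxV
  · obtain ⟨m, hm, hiter⟩ := hx
    exact mem_closed_of_strictAnc hV m z x hxV hm hiter

lemma sub_subset_sub {T : TreeNet α} {V : Finset α} {c z : α}
    (h : T.StrictAnc z c) : T.sub V c ⊆ T.sub V z := by
  intro x hx
  obtain ⟨hxV, hx | hx⟩ := Finset.mem_filter.mp hx
  · subst hx; exact Finset.mem_filter.mpr ⟨hxV, Or.inr h⟩
  · exact Finset.mem_filter.mpr ⟨hxV, Or.inr (strictAnc_trans h hx)⟩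

lemma eq_of_mem_sub_of_mem_sub {T : TreeNet α} {V : Finset α} {q r x : α}
    (hd : T.depth q = T.depth r) (hq : x ∈ T.sub V q) (hr : x ∈ T.sub V r) :
    q = r := by
  have h1 := (T.mem_sub_iff.mp hq).2
  have h2 := (T.mem_sub_iff.mp hr).2
  rw [hd] at h1; rw [h1] at h2; simpa using h2

lemma parent_of_mem_X {T : TreeNet α} {V : Finset α} {hb : α} {j : ℕ}
    {q : α} (hq : q ∈ T.X V hb j) : T.parent q = T.aIdx hb (j-1) :=
  (Finset.mem_filter.mp hq).2

lemma depth_of_mem_X {T : TreeNet α} {V : Finset α} {hb : α} {j : ℕ}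
    {q : α} (hq : q ∈ T.X V hb j) {A : α}
    (hA : T.aIdx hb (j-1) = some A) : T.depth q = T.depth A + 1 :=
  T.depth_child q A (by rw [parent_of_mem_X hq, hA])

lemma depth_of_mem_X_root {T : TreeNet α} {V : Finset α} {hb : α} {j : ℕ}
    {q : α} (hq : q ∈ T.X V hb j) (hA : T.aIdx hb (j-1) = none) :
    T.depth q = 0 :=
  T.depth_root q (by rw [parent_of_mem_X hq, hA])

lemma X_depth_eq {T : TreeNet α} {V : Finset α} {hb : α} {j : ℕ}
    {q r : α} (hq : q ∈ T.X V hb j) (hr : r ∈ T.X V hb j) :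
    T.depth q = T.depth r := by
  cases hA : T.aIdx hb (j-1) with
  | none => rw [depth_of_mem_X_root hq hA, depth_of_mem_X_root hr hA]
  | some A => rw [depth_of_mem_X hq hA, depth_of_mem_X hr hA]

lemma X_sib_eq {T : TreeNet α} {V : Finset α} {hb : α} {j : ℕ}
    {q r x : α} (hq : q ∈ T.X V hb j) (hr : r ∈ T.X V hb j)
    (hxq : x ∈ T.sub V q) (hxr : x ∈ T.sub V r) : q = r :=
  eq_of_mem_sub_of_mem_sub (X_depth_eq hq hr) hxq hxr

lemma mem_V_of_mem_X {T : TreeNet α} {V : Finset α} {hb : α} {j : ℕ}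
    {q : α} (hq : q ∈ T.X V hb j) : q ∈ V := (Finset.mem_filter.mp hq).1

lemma aIdx_parent {T : TreeNet α} {i w : α} {j : ℕ} (hj : 1 ≤ j)
    (h : T.aIdx i j = some w) : T.parent w = T.aIdx i (j-1) := by
  rw [aIdx, if_neg (by omega)] at h
  rcases Nat.eq_or_lt_of_le hj with h1 | h1
  · rw [aIdx, if_pos (by omega)]
    exact T.seq_getElem_zero_parent _ i rfl w (by rw [← h]; congr 1; omega)
  · rw [aIdx, if_neg (by omega)]
    have h2 : j - 1 = (j - 2) + 1 := by omega
    rw [h2] at h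
    have h3 : j - 1 - 1 = j - 2 := by omega
    rw [h3, ← T.seq_getElem_succ _ i rfl (j-2) w h]

lemma aIdx_depth {T : TreeNet α} {i w : α} {j : ℕ}
    (h : T.aIdx i j = some w) : T.depth w = j - 1 := by
  rw [aIdx] at h
  split at h
  · simp at h
  · exact T.seq_getElem_some_depth _ i rfl _ w h

lemma mem_sub_of_aIdx {T : TreeNet α} {V : Finset α} {i w : α} {j : ℕ}
    (h : T.aIdx i j = some w) (hi : i ∈ V) : i ∈ T.sub V w := by
  have hd : T.depth w = j - 1 := aIdx_depth h
  rw [aIdx] at h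
  split at h
  · simp at h
  · exact T.mem_sub_iff.mpr ⟨hi, by rw [hd]; exact h⟩

lemma aIdx_of_mem_sub {T : TreeNet α} {V : Finset α} {x w : α} {j : ℕ}
    (hj : 1 ≤ j) (hd : T.depth w = j - 1) (h : x ∈ T.sub V w) :
    T.aIdx x j = some w := by
  rw [aIdx, if_neg (by omega), ← hd]
  exact (T.mem_sub_iff.mp h).2

lemma aIdx_isSome_of_le {T : TreeNet α} {i : α} {j : ℕ} {w : α} {j' : ℕ}
    (h : T.aIdx i j = some w) (hj' : 1 ≤ j') (hle : j' ≤ j) :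
    ∃ w', T.aIdx i j' = some w' := by
  rw [aIdx] at h
  split at h
  · simp at h
  · rename_i hj0
    have hlt : j - 1 < (T.seq i).length := (List.getElem?_eq_some_iff.mp h).1
    rw [aIdx, if_neg (by omega)]
    have hlt' : j' - 1 < (T.seq i).length := by omega
    exact ⟨(T.seq i)[j'-1], List.getElem?_eq_getElem hlt'⟩


end TreeNet

/-- Quantitative per-step surplus bound for asymptotic budget
balance: for every executed step `j` of NRM in trees, with `X_j` ordered by
decreasing subtree maxima `v^{(1)}_{V_{x₁}} ≥ v^{(1)}_{V_{x₂}} ≥ …` and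
`λ = (n_{x₁} + n_{x₂}) / n_{X_j}`, the step surplus satisfies
`0 ≤ p^{auc}_{a_j} - p^{auc}_{a_{j-1}} - Σ_{q ∈ X_j} R_q
   ≤ λ ⬝ (v^{(1)}_{V_{x₂}} - v^{(1)}_{V_{x₃}}) ≤ λ ⬝ M`,
where `M` is any upper bound on all reported valuations. -/
theorem TreeNet.nrm_tree_step_surplus_bound
    {α : Type} [Fintype α] [DecidableEq α] (T : TreeNet α)
    (V : Finset α) (hV : T.Closed V)
    (val : α → ℝ) (hval : ∀ i ∈ V, 0 ≤ val i)
    (M : ℝ) (hM : ∀ i ∈ V, val i ≤ M)                      -- any valuation bound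
    (sel : Finset α → Option α) (hsel : TreeNet.SelValid val sel)
    (hb : α) (hhb : TreeNet.IsTop V val hb)
    (j : ℕ) (hj1 : 1 ≤ j) (hj2 : j ≤ T.stepJ V val hb)    -- an executed step
    -- an enumeration x₁ :: x₂ :: x₃ :: rest of X_j ordered by decreasing
    -- subtree maxima:
    (x1 x2 x3 : α) (rest : List α)
    (hnd : (x1 :: x2 :: x3 :: rest).Nodup)
    (henum : (x1 :: x2 :: x3 :: rest).toFinset = T.X V hb j)
    (hsorted : (x1 :: x2 :: x3 :: rest).Chain'
      (fun x y => TreeNet.vmax val (T.sub V y) ≤ TreeNet.vmax val (T.sub V x))) :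
    0 ≤ T.pauc V val hb j - T.pauc V val hb (j - 1)
        - (∑ q ∈ T.X V hb j, T.R V val sel hb j q) ∧
    T.pauc V val hb j - T.pauc V val hb (j - 1)
        - (∑ q ∈ T.X V hb j, T.R V val sel hb j q) ≤
      ((T.nsub V x1 : ℝ) + (T.nsub V x2 : ℝ)) / (T.nX V hb j : ℝ) *
        (TreeNet.vmax val (T.sub V x2) - TreeNet.vmax val (T.sub V x3)) ∧
    ((T.nsub V x1 : ℝ) + (T.nsub V x2 : ℝ)) / (T.nX V hb j : ℝ) *
        (TreeNet.vmax val (T.sub V x2) - TreeNet.vmax val (T.sub V x3)) ≤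
      ((T.nsub V x1 : ℝ) + (T.nsub V x2 : ℝ)) / (T.nX V hb j : ℝ) * M := by
  classical
  obtain ⟨hhbV, htop⟩ := hhb
  -- the step is executed, hence `a_j` exists
  have hSne : {k | 1 ≤ k ∧ T.Stops V val hb k}.Nonempty := by
    by_contra hc
    rw [Set.not_nonempty_iff_eq_empty] at hc
    have h0 : T.stepJ V val hb = 0 := by rw [stepJ, hc, Nat.sInf_empty]
    omega
  have hstops := Nat.sInf_mem hSne
  obtain ⟨iW, hiW, _⟩ := hstops.2
  have hiW' : T.aIdx hb (T.stepJ V val hb) = some iW := hiW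
  obtain ⟨aj, haj⟩ := T.aIdx_isSome_of_le hiW' hj1 hj2
  have hhbsub : hb ∈ T.sub V aj := T.mem_sub_of_aIdx haj hhbV
  have hajV : aj ∈ V := root_mem_of_mem_sub hV hhbsub
  have hajX : aj ∈ T.X V hb j := by
    rw [X, childrenOf, Finset.mem_filter]
    exact ⟨hajV, aIdx_parent hj1 haj⟩
  have hpj : T.pauc V val hb j = vmax val (V \ T.sub V aj) := by
    rw [pauc, haj]
  -- abbreviations
  set p : ℝ := T.pauc V val hb j with hp_def
  set out : ℝ := T.pauc V val hb (j - 1) with hout_def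
  set m : α → ℝ := fun r => vmax val (T.sub V r) with hm_def
  set Xf : Finset α := T.X V hb j with hXf_def
  set N : ℝ := (T.nX V hb j : ℝ) with hN_def
  -- membership of the enumeration
  have hmemX : ∀ r : α, r ∈ Xf ↔ (r = x1 ∨ r = x2 ∨ r = x3 ∨ r ∈ rest) := by
    intro r
    rw [← henum]
    simp
  have hx1X : x1 ∈ Xf := (hmemX x1).mpr (Or.inl rfl)
  have hx2X : x2 ∈ Xf := (hmemX x2).mpr (Or.inr (Or.inl rfl))
  have hx3X : x3 ∈ Xf := (hmemX x3).mpr (Or.inr (Or.inr (Or.inl rfl)))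
  have hx12 : x1 ≠ x2 := by
    intro h; rw [List.nodup_cons] at hnd; exact hnd.1 (by rw [h]; simp)
  have hx13 : x1 ≠ x3 := by
    intro h; rw [List.nodup_cons] at hnd; exact hnd.1 (by rw [h]; simp)
  have hx23 : x2 ≠ x3 := by
    intro h
    rw [List.nodup_cons, List.nodup_cons] at hnd
    exact hnd.2.1 (by rw [h]; simp)
  -- sortedness facts
  haveI : IsTrans α (fun x y : α => m y ≤ m x) := ⟨fun a b c hab hbc => le_trans hbc hab⟩
  have hpw : (x1 :: x2 :: x3 :: rest).Pairwise (fun x y => m y ≤ m x) :=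
    List.isChain_iff_pairwise.mp hsorted
  obtain ⟨hpw1, hpwt⟩ := List.pairwise_cons.mp hpw
  obtain ⟨hpw2, hpwtt⟩ := List.pairwise_cons.mp hpwt
  obtain ⟨hpw3, -⟩ := List.pairwise_cons.mp hpwtt
  have hle1 : ∀ r ∈ Xf, m r ≤ m x1 := by
    intro r hr
    rcases (hmemX r).mp hr with h | h | h | h
    · rw [h]
    · rw [h]; exact hpw1 x2 (by simp)
    · rw [h]; exact hpw1 x3 (by simp)
    · exact hpw1 r (by simp [h])
  have hle2 : ∀ r ∈ Xf, r ≠ x1 → m r ≤ m x2 := by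
    intro r hr hr1
    rcases (hmemX r).mp hr with h | h | h | h
    · exact absurd h hr1
    · rw [h]
    · rw [h]; exact hpw2 x3 (by simp)
    · exact hpw2 r (by simp [h])
  have hle3 : ∀ r ∈ Xf, r ≠ x1 → r ≠ x2 → m r ≤ m x3 := by
    intro r hr hr1 hr2
    rcases (hmemX r).mp hr with h | h | h | h
    · exact absurd h hr1
    · exact absurd h hr2
    · rw [h]
    · exact hpw3 r h
  have h23 : m x3 ≤ m x2 := hpw2 x3 (by simp)
  -- basic facts about subtree of `aj` and valuations
  have hsubV : ∀ r : α, T.sub V r ⊆ V := fun r => Finset.filter_subset _ _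
  have hnotin : ∀ r ∈ Xf, r ≠ aj → r ∉ T.sub V aj := by
    intro r hr hne hmem
    exact hne (X_sib_eq hr hajX (self_mem_sub (mem_V_of_mem_X hr)) hmem)
  have Hne : (V \ T.sub V aj).Nonempty := by
    rcases eq_or_ne aj x1 with h | h
    · exact ⟨x2, Finset.mem_sdiff.mpr ⟨mem_V_of_mem_X hx2X,
        hnotin x2 hx2X (by rw [h]; exact hx12.symm) ⟩⟩
    · exact ⟨x1, Finset.mem_sdiff.mpr ⟨mem_V_of_mem_X hx1X,
        hnotin x1 hx1X (Ne.symm h)⟩⟩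
  have hval' : ∀ x ∈ V \ T.sub V aj, 0 ≤ val x :=
    fun x hx => hval x (Finset.mem_sdiff.mp hx).1
  have hp0 : 0 ≤ p := by rw [hpj]; exact vmax_nonneg hval'
  have hpt : p ≤ val hb := by
    rw [hpj]
    exact vmax_le Hne fun x hx => htop x (Finset.mem_sdiff.mp hx).1
  have ht0 : 0 ≤ val hb := hval hb hhbV
  have hmaj_ub : ∀ r ∈ Xf, m r ≤ val hb := by
    intro r hr
    apply vmax_le' ht0
    intro x hx; exact htop x (hsubV r hx)
  have hmaj : m aj = val hb := by
    apply le_antisymm (hmaj_ub aj hajX)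
    exact le_vmax hhbsub
  have hmx1 : m x1 = val hb := by
    apply le_antisymm (hmaj_ub x1 hx1X)
    rw [← hmaj]; exact hle1 aj hajX
  have hLv2 : ∀ r ∈ Xf, r ≠ aj → m r ≤ m x2 := by
    intro r hr hne
    rcases eq_or_ne r x1 with h | h
    · subst h
      rw [hmx1, ← hmaj]
      exact hle2 aj hajX (fun hh => hne hh.symm)
    · exact hle2 r hr h
  -- `out ≤ p`
  have hout_le_p : out ≤ p := by
    rcases Nat.eq_or_lt_of_le hj1 with h1 | h1
    · have : T.aIdx hb (j - 1) = none := by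
        rw [aIdx, if_pos (by omega)]
      rw [hout_def, pauc, this]
      exact hp0
    · obtain ⟨A, hA⟩ := T.aIdx_isSome_of_le haj (by omega : 1 ≤ j - 1) (by omega)
      have hparA : T.parent aj = some A := by rw [aIdx_parent hj1 haj, hA]
      have hss : T.sub V aj ⊆ T.sub V A := sub_subset_sub (strictAnc_of_parent hparA)
      rw [hout_def, pauc, hA]
      apply vmax_le' hp0
      intro x hx
      rw [Finset.mem_sdiff] at hx
      rw [hpj]
      exact le_vmax (Finset.mem_sdiff.mpr ⟨hx.1, fun hc => hx.2 (hss hc)⟩)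
  -- the key per-child bounds
  have key : ∀ q ∈ Xf, T.Sneg V val sel hb j q ≤ p - out ∧
      p - out - T.Sneg V val sel hb j q ≤ m x2 - m x3 ∧
      (q ≠ x1 → q ≠ x2 → p - out - T.Sneg V val sel hb j q ≤ 0) := by
    intro q hq
    have hqV : q ∈ V := mem_V_of_mem_X hq
    have hdisj : ∀ r, r ∈ Xf → ∀ r', r' ∈ Xf → r ≠ r' → r ∉ T.sub V r' := by
      intro r hr r' hr' hne hc
      exact hne (X_sib_eq hr hr' (self_mem_sub (mem_V_of_mem_X hr)) hc)
    have hVqne : (V \ T.sub V q).Nonempty := by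
      rcases eq_or_ne q x1 with h | h
      · exact ⟨x2, Finset.mem_sdiff.mpr ⟨mem_V_of_mem_X hx2X,
          by rw [h]; exact hdisj x2 hx2X x1 hx1X hx12.symm⟩⟩
      · exact ⟨x1, Finset.mem_sdiff.mpr ⟨mem_V_of_mem_X hx1X,
          hdisj x1 hx1X q hq (Ne.symm h)⟩⟩
    obtain ⟨h', hsel_eq⟩ := (hsel (V \ T.sub V q)).1 hVqne
    obtain ⟨hh'mem, hh'top⟩ := (hsel (V \ T.sub V q)).2 h' hsel_eq
    have hh'V : h' ∈ V := (Finset.mem_sdiff.mp hh'mem).1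
    have hh'nq : h' ∉ T.sub V q := (Finset.mem_sdiff.mp hh'mem).2
    have hSneg : T.Sneg V val sel hb j q =
        (if T.aIdx h' (j-1) = T.aIdx hb (j-1) then
          vmax val (V \ (T.subO V (T.aIdx h' j) ∪ T.sub V q)) - T.pauc V val hb (j-1)
        else 0) := by
      rw [Sneg.eq_def, hsel_eq]
    have hd23 : 0 ≤ m x2 - m x3 := by linarith
    by_cases hcond : T.aIdx h' (j - 1) = T.aIdx hb (j - 1)
    · -- the ancestor condition holds
      rw [hSneg, if_pos hcond, ← hout_def]
      -- dichotomy for the `j`-th ancestor of `h'`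
      have hDcases : (T.aIdx h' j = none ∧ h' ∉ T.sub V aj) ∨
          (∃ q', T.aIdx h' j = some q' ∧ q' ∈ Xf ∧ h' ∈ T.sub V q') := by
        cases hD : T.aIdx h' j with
        | some q' =>
          right
          have hmem : h' ∈ T.sub V q' := mem_sub_of_aIdx hD hh'V
          have hq'V : q' ∈ V := root_mem_of_mem_sub hV hmem
          have hpar : T.parent q' = T.aIdx h' (j-1) := aIdx_parent hj1 hD
          rw [hcond] at hpar
          exact ⟨q', rfl, Finset.mem_filter.mpr ⟨hq'V, hpar⟩, hmem⟩
        | none =>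
          left
          refine ⟨rfl, ?_⟩
          have hj2' : 2 ≤ j := by
            by_contra hjc
            have hj1' : j = 1 := by omega
            rw [hj1', aIdx, if_neg one_ne_zero] at hD
            have hlen : 0 < (T.seq h').length := by
              rw [T.seq_length _ h' rfl]; omega
            rw [List.getElem?_eq_getElem hlen] at hD
            simp at hD
          obtain ⟨A, hA⟩ := T.aIdx_isSome_of_le haj (by omega : 1 ≤ j - 1) (by omega)
          have hdA : T.depth A = j - 1 - 1 := aIdx_depth hA
          have hh'subA : h' ∈ T.sub V A :=
            mem_sub_of_aIdx (hcond.trans hA) hh'V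
          have hdh' : T.depth h' < j - 1 := by
            by_contra hge
            push_neg at hge
            rw [aIdx, if_neg (by omega)] at hD
            have hlen : j - 1 < (T.seq h').length := by
              rw [T.seq_length _ h' rfl]; omega
            rw [List.getElem?_eq_getElem hlen] at hD
            simp at hD
          have hh'eqA : h' = A := by
            obtain ⟨-, h'' | h''⟩ := Finset.mem_filter.mp hh'subA
            · exact h''
            · exfalso
              have := depth_lt_of_strictAnc h''
              omega
          rw [hh'eqA]
          intro hc
          have hdaj : T.depth aj = j - 1 := aIdx_depth haj
          obtain ⟨-, h'' | h''⟩ := Finset.mem_filter.mp hc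
          · rw [h''] at hdA; omega
          · have := depth_lt_of_strictAnc h''
            omega
      -- subtrees of untouched siblings are contained in the complement
      have hsubO_E : ∀ r, r ∈ Xf → r ≠ q → T.aIdx h' j ≠ some r →
          T.sub V r ⊆ V \ (T.subO V (T.aIdx h' j) ∪ T.sub V q) := by
        intro r hr hrq hrD x hx
        refine Finset.mem_sdiff.mpr ⟨mem_of_mem_sub hx, ?_⟩
        intro hcx
        rcases Finset.mem_union.mp hcx with hcx | hcx
        · rcases hDcases with ⟨hnone, -⟩ | ⟨q', hq'eq, hq'X, -⟩
          · rw [hnone] at hcx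
            exact Finset.notMem_empty x hcx
          · rw [hq'eq] at hcx
            exact hrD (by rw [hq'eq, X_sib_eq hr hq'X hx hcx])
        · exact hrq (X_sib_eq hr hq hx hcx)
      have hvE_ge : ∀ r, r ∈ Xf → r ≠ q → T.aIdx h' j ≠ some r →
          m r ≤ vmax val (V \ (T.subO V (T.aIdx h' j) ∪ T.sub V q)) := by
        intro r hr hrq hrD
        have hsub := hsubO_E r hr hrq hrD
        have hrE := hsub (self_mem_sub (mem_V_of_mem_X hr))
        exact vmax_le' (le_trans (hval r (mem_V_of_mem_X hr)) (le_vmax hrE))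
          (fun x hx => le_vmax (hsub hx))
      -- upper bound (iii):  vmax E ≤ p
      have hvE_le_p : vmax val (V \ (T.subO V (T.aIdx h' j) ∪ T.sub V q)) ≤ p := by
        by_cases hcase : q = aj ∨ T.aIdx h' j = some aj
        · apply vmax_le' hp0
          intro x hx
          rw [Finset.mem_sdiff] at hx
          rw [hpj]
          apply le_vmax
          refine Finset.mem_sdiff.mpr ⟨hx.1, fun hc => hx.2 ?_⟩
          rcases hcase with h | h
          · exact Finset.mem_union_right _ (show x ∈ T.sub V q by rw [h]; exact hc)
          · exact Finset.mem_union_left _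
              (show x ∈ T.subO V (T.aIdx h' j) by rw [h]; exact hc)
        · push_neg at hcase
          obtain ⟨hqaj, hDaj⟩ := hcase
          have hh'naj : h' ∉ T.sub V aj := by
            rcases hDcases with ⟨-, hnaj⟩ | ⟨q', hq'eq, hq'X, hmem⟩
            · exact hnaj
            · intro hc
              exact hDaj (by rw [hq'eq, X_sib_eq hq'X hajX hmem hc])
          have hph : val hb ≤ p := by
            have h1 : val hb ≤ val h' := hh'top hb (Finset.mem_sdiff.mpr
              ⟨hhbV, fun hc => hqaj (X_sib_eq hq hajX hc hhbsub)⟩)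
            have h2 : val h' ≤ p := by
              rw [hpj]
              exact le_vmax (Finset.mem_sdiff.mpr ⟨hh'V, hh'naj⟩)
            linarith
          apply vmax_le' (le_trans ht0 hph)
          intro x hx
          exact le_trans (htop x (Finset.mem_sdiff.mp hx).1) hph
      -- a sibling among x1, x2, x3 untouched by q and h'
      have hpick3 : ∃ c, (c = x1 ∨ c = x2 ∨ c = x3) ∧ c ≠ q ∧ T.aIdx h' j ≠ some c := by
        by_cases e1q : q = x1
        · by_cases e2D : T.aIdx h' j = some x2
          · refine ⟨x3, Or.inr (Or.inr rfl), by rw [e1q]; exact hx13.symm, ?_⟩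
            rw [e2D]
            exact fun hh => hx23 (Option.some.inj hh)
          · exact ⟨x2, Or.inr (Or.inl rfl), by rw [e1q]; exact hx12.symm, e2D⟩
        · by_cases e1D : T.aIdx h' j = some x1
          · by_cases e2q : q = x2
            · refine ⟨x3, Or.inr (Or.inr rfl), by rw [e2q]; exact hx23.symm, ?_⟩
              rw [e1D]
              exact fun hh => hx13 (Option.some.inj hh)
            · exact ⟨x2, Or.inr (Or.inl rfl), Ne.symm e2q, by
                rw [e1D]; exact fun hh => hx12 (Option.some.inj hh)⟩
          · exact ⟨x1, Or.inl rfl, Ne.symm e1q, e1D⟩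
      obtain ⟨c, hc123, hcq, hcD⟩ := hpick3
      have hcX : c ∈ Xf := by
        rcases hc123 with h | h | h <;> rw [h]
        · exact hx1X
        · exact hx2X
        · exact hx3X
      have hmc3 : m x3 ≤ m c := by
        rcases hc123 with h | h | h
        · rw [h]; exact hpw1 x3 (by simp)
        · rw [h]; exact h23
        · rw [h]
      have hvE3 : m x3 ≤ vmax val (V \ (T.subO V (T.aIdx h' j) ∪ T.sub V q)) :=
        le_trans hmc3 (hvE_ge c hcX hcq hcD)
      -- the max bound:  p ≤ max (vmax E) (m x2)
      have hpmax : p ≤ max (vmax val (V \ (T.subO V (T.aIdx h' j) ∪ T.sub V q))) (m x2) := by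
        rw [hpj]
        apply vmax_le Hne
        intro y hy
        rw [Finset.mem_sdiff] at hy
        by_cases hyq : y ∈ T.sub V q
        · by_cases hqaj : q = aj
          · exact absurd (show y ∈ T.sub V aj by rw [← hqaj]; exact hyq) hy.2
          · exact le_max_of_le_right (le_trans (le_vmax hyq) (hLv2 q hq hqaj))
        · by_cases hyD : y ∈ T.subO V (T.aIdx h' j)
          · rcases hDcases with ⟨hnone, -⟩ | ⟨q', hq'eq, hq'X, -⟩
            · rw [hnone] at hyD
              exact absurd hyD (Finset.notMem_empty y)
            · have hyq' : y ∈ T.sub V q' := by rw [hq'eq] at hyD; exact hyD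
              have hq'aj : q' ≠ aj := fun hh => hy.2 (by rw [← hh]; exact hyq')
              exact le_max_of_le_right (le_trans (le_vmax hyq') (hLv2 q' hq'X hq'aj))
          · refine le_max_of_le_left (le_vmax (Finset.mem_sdiff.mpr ⟨hy.1, fun hc => ?_⟩))
            rcases Finset.mem_union.mp hc with hcc | hcc
            · exact hyD hcc
            · exact hyq hcc
      refine ⟨by linarith, ?_, ?_⟩
      · -- middle bound
        rcases le_max_iff.mp hpmax with h | h
        · linarith
        · linarith
      · -- bound for siblings other than x1, x2
        intro hq1 hq2
        by_cases hcase : q = aj ∨ T.aIdx h' j = some aj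
        · -- pick an untouched top sibling
          have hpick : ∃ c', (c' = x1 ∨ c' = x2) ∧ c' ≠ q ∧ T.aIdx h' j ≠ some c' := by
            by_cases e1D : T.aIdx h' j = some x1
            · refine ⟨x2, Or.inr rfl, Ne.symm hq2, ?_⟩
              rw [e1D]
              exact fun hh => hx12 (Option.some.inj hh)
            · exact ⟨x1, Or.inl rfl, Ne.symm hq1, e1D⟩
          obtain ⟨c', hc'12, hc'q, hc'D⟩ := hpick
          have hc'X : c' ∈ Xf := by
            rcases hc'12 with h | h <;> rw [h]
            · exact hx1X
            · exact hx2X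
          have hmc2 : m x2 ≤ m c' := by
            rcases hc'12 with h | h
            · rw [h]; exact hpw1 x2 (by simp)
            · rw [h]
          have h2vE : m x2 ≤ vmax val (V \ (T.subO V (T.aIdx h' j) ∪ T.sub V q)) :=
            le_trans hmc2 (hvE_ge c' hc'X hc'q hc'D)
          rcases le_max_iff.mp hpmax with h | h
          · linarith
          · linarith
        · push_neg at hcase
          obtain ⟨hqaj, hDaj⟩ := hcase
          have hajvE : m aj ≤ vmax val (V \ (T.subO V (T.aIdx h' j) ∪ T.sub V q)) :=
            hvE_ge aj hajX (Ne.symm hqaj) hDaj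
          rw [hmaj] at hajvE
          linarith
    · -- the ancestor condition fails:  S = 0 and p = out
      rw [hSneg, if_neg hcond]
      have hj2' : 2 ≤ j := by
        by_contra hjc
        have hj1' : j = 1 := by omega
        apply hcond
        rw [hj1']
        simp [aIdx]
      obtain ⟨A, hA⟩ := T.aIdx_isSome_of_le haj (by omega : 1 ≤ j - 1) (by omega)
      have hdA : T.depth A = j - 1 - 1 := aIdx_depth hA
      have hh'A : h' ∉ T.sub V A := by
        intro hc
        exact hcond (by rw [aIdx_of_mem_sub (by omega : 1 ≤ j - 1) hdA hc, hA])
      have hout_eq : out = vmax val (V \ T.sub V A) := by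
        rw [hout_def, pauc, hA]
      have h1 : val h' ≤ out := by
        rw [hout_eq]
        exact le_vmax (Finset.mem_sdiff.mpr ⟨hh'V, hh'A⟩)
      have h2 : p ≤ val h' := by
        rcases eq_or_ne q aj with hqaj | hqaj
        · have hpq : p = vmax val (V \ T.sub V q) := by rw [hpj, hqaj]
          rw [hpq]
          exact vmax_le' (hval h' hh'V) hh'top
        · have hbmem : hb ∈ V \ T.sub V q := Finset.mem_sdiff.mpr
            ⟨hhbV, fun hc => hqaj (X_sib_eq hq hajX hc hhbsub)⟩
          exact le_trans hpt (hh'top hb hbmem)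
      refine ⟨by linarith, by linarith, fun _ _ => by linarith⟩

  -- positivity of `N`
  have hNpos : 0 < N := by
    rw [hN_def]
    have hcard : 0 < T.nsub V x1 :=
      Finset.card_pos.mpr ⟨x1, self_mem_sub (mem_V_of_mem_X (show x1 ∈ T.X V hb j from hx1X))⟩
    have hle : T.nsub V x1 ≤ T.nX V hb j :=
      Finset.single_le_sum (f := fun q => T.nsub V q)
        (fun q _ => Nat.zero_le _) (show x1 ∈ T.X V hb j from hx1X)
    have h1 : 0 < T.nX V hb j := lt_of_lt_of_le hcard hle
    exact_mod_cast h1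
  -- rewriting the step surplus as a weighted sum
  have hsumN : ∑ q ∈ Xf, (T.nsub V q : ℝ) = N := by
    have h : T.nX V hb j = ∑ q ∈ T.X V hb j, T.nsub V q := rfl
    rw [hN_def, hXf_def, h]
    push_cast
    rfl
  have hs1 : ∑ q ∈ Xf, ((T.nsub V q : ℝ) / N) * (p - out) = p - out := by
    rw [← Finset.sum_mul, ← Finset.sum_div, hsumN, div_self hNpos.ne', one_mul]
  have hEq : p - out - (∑ q ∈ Xf, T.R V val sel hb j q)
      = ∑ q ∈ Xf, ((T.nsub V q : ℝ) / N) * ((p - out) - T.Sneg V val sel hb j q) := by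
    have h1 : ∀ q ∈ Xf, ((T.nsub V q : ℝ)/N) * ((p-out) - T.Sneg V val sel hb j q)
        = ((T.nsub V q:ℝ)/N)*(p-out) - T.R V val sel hb j q := by
      intro q hq
      have hr : T.R V val sel hb j q = (T.nsub V q : ℝ)/N * T.Sneg V val sel hb j q := rfl
      rw [hr]; ring
    rw [Finset.sum_congr rfl h1, Finset.sum_sub_distrib, hs1]
  constructor
  · rw [hEq]
    apply Finset.sum_nonneg
    intro q hq
    apply mul_nonneg (div_nonneg (Nat.cast_nonneg _) hNpos.le)
    exact sub_nonneg.mpr ((key q hq).1)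
  constructor
  · rw [hEq]
    have hstep : ∀ q ∈ Xf, ((T.nsub V q : ℝ) / N) * ((p - out) - T.Sneg V val sel hb j q)
        ≤ (if q = x1 ∨ q = x2 then ((T.nsub V q : ℝ) / N) * (m x2 - m x3) else 0) := by
      intro q hq
      by_cases hcase : q = x1 ∨ q = x2
      · rw [if_pos hcase]
        exact mul_le_mul_of_nonneg_left (key q hq).2.1
          (div_nonneg (Nat.cast_nonneg _) hNpos.le)
      · rw [if_neg hcase]
        push_neg at hcase
        exact mul_nonpos_of_nonneg_of_nonpos
          (div_nonneg (Nat.cast_nonneg _) hNpos.le)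
          ((key q hq).2.2 hcase.1 hcase.2)
    refine le_trans (Finset.sum_le_sum hstep) ?_
    have hfil : Xf.filter (fun q => q = x1 ∨ q = x2) = {x1, x2} := by
      ext r
      simp only [Finset.mem_filter, Finset.mem_insert, Finset.mem_singleton]
      constructor
      · rintro ⟨-, h⟩; exact h
      · rintro (h | h) <;> subst h
        · exact ⟨hx1X, Or.inl rfl⟩
        · exact ⟨hx2X, Or.inr rfl⟩
    rw [← Finset.sum_filter, hfil, Finset.sum_pair hx12]
    apply le_of_eq
    ring
  · apply mul_le_mul_of_nonneg_left
    · have h1 : m x2 ≤ M := by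
        apply vmax_le ⟨x2, self_mem_sub (mem_V_of_mem_X hx2X)⟩
        intro x hx; exact hM x (hsubV x2 hx)
      have h2 : 0 ≤ m x3 := vmax_nonneg fun x hx => hval x (hsubV x3 hx)
      linarith
    · positivity
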